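/- Fix m, l, g > 0, ρ ∈ ℝ, χ ∈ ℝ³, and a symmetric positive-definite 3×3 real matrix 𝕀. Let Ω, v, Γ : ℝ → ℝ³ solve the closed-loop Euler–Poincaré system. Then the energy E(t) = ½ Ω(t)·𝕀Ω(t) + m l v(t)·(Ω(t) × χ) + ½ ρ ‖v(t)‖² + m g l χ·Γ(t) is constant in t. -/

import Mathlib

open Matrix

private lemma hasDerivAt_dot {n : ℕ} {f g : ℝ → Fin n → ℝ} {f' g' : Fin n → ℝ} {t : ℝ}
    (hf : HasDerivAt f f' t) (hg : HasDerivAt g g' t) :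
    HasDerivAt (fun s => f s ⬝ᵥ g s) (f' ⬝ᵥ g t + f t ⬝ᵥ g') t := by
  have hfi := fun i => hasDerivAt_pi.1 hf i
  have hgi := fun i => hasDerivAt_pi.1 hg i
  simp only [dotProduct, ← Finset.sum_add_distrib]
  exact HasDerivAt.fun_sum fun i _ => (hfi i).mul (hgi i)

/-- The closed-loop Euler–Poincaré system: with `μ = 𝕀Ω + m l (χ × v)` and
`p = ρ v + m l (Ω × χ)`, the curves satisfy
`μ' = μ × Ω + p × v − m g l (χ × Γ)`, `p' = p × Ω`, `Γ' = Γ × Ω`. -/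
def ClosedLoopEP (m l g ρ : ℝ) (χ : Fin 3 → ℝ) (I : Matrix (Fin 3) (Fin 3) ℝ)
    (Ω v Γ : ℝ → Fin 3 → ℝ) : Prop :=
  Differentiable ℝ Ω ∧ Differentiable ℝ v ∧ Differentiable ℝ Γ ∧
  (∀ t, deriv (fun s => I *ᵥ Ω s + (m * l) • (χ ⨯₃ v s)) t
      = (I *ᵥ Ω t + (m * l) • (χ ⨯₃ v t)) ⨯₃ Ω t
        + (ρ • v t + (m * l) • (Ω t ⨯₃ χ)) ⨯₃ v t - (m * g * l) • (χ ⨯₃ Γ t)) ∧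
  (∀ t, deriv (fun s => ρ • v s + (m * l) • (Ω s ⨯₃ χ)) t
      = (ρ • v t + (m * l) • (Ω t ⨯₃ χ)) ⨯₃ Ω t) ∧
  (∀ t, deriv Γ t = Γ t ⨯₃ Ω t)

/-- Along solutions of the closed-loop Euler–Poincaré system, the energy
`E = ½ Ω·𝕀Ω + m l v·(Ω × χ) + ½ ρ ‖v‖² + m g l χ·Γ` is constant in time. -/
theorem energy_constant (m l g ρ : ℝ) (hm : 0 < m) (hl : 0 < l) (hg : 0 < g)
    (χ : Fin 3 → ℝ) (I : Matrix (Fin 3) (Fin 3) ℝ) (hIsymm : Iᵀ = I)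
    (hIpos : ∀ x : Fin 3 → ℝ, x ≠ 0 → 0 < x ⬝ᵥ I *ᵥ x)
    (Ω v Γ : ℝ → Fin 3 → ℝ) (hsol : ClosedLoopEP m l g ρ χ I Ω v Γ)
    (E : ℝ → ℝ)
    (hE : ∀ t, E t = (1 / 2) * (Ω t ⬝ᵥ I *ᵥ Ω t) + m * l * (v t ⬝ᵥ Ω t ⨯₃ χ)
        + (1 / 2) * ρ * (v t ⬝ᵥ v t) + m * g * l * (χ ⬝ᵥ Γ t)) :
    ∀ t, E t = E 0 := by
  obtain ⟨hΩd, hvd, hΓd, hμ, hp, hΓeq⟩ := hsol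
  have key : ∀ t, HasDerivAt E 0 t := by
    intro t
    have hΩt := (hΩd t).hasDerivAt
    have hvt := (hvd t).hasDerivAt
    have hΓt := (hΓd t).hasDerivAt
    set Ω' := deriv Ω t with hΩ'def
    set v' := deriv v t with hv'def
    have hIΩ : HasDerivAt (fun s => I *ᵥ Ω s) (I *ᵥ Ω') t := by
      have := (LinearMap.toContinuousLinearMap (Matrix.mulVecLin I)).hasFDerivAt.comp_hasDerivAt t hΩt
      exact this
    have hχv : HasDerivAt (fun s => χ ⨯₃ v s) (χ ⨯₃ v') t := by
      have := (LinearMap.toContinuousLinearMap (crossProduct χ)).hasFDerivAt.comp_hasDerivAt t hvt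
      exact this
    have hΩχ : HasDerivAt (fun s => Ω s ⨯₃ χ) (Ω' ⨯₃ χ) t := by
      have := (LinearMap.toContinuousLinearMap
        ((LinearMap.flip (crossProduct : (Fin 3 → ℝ) →ₗ[ℝ] (Fin 3 → ℝ) →ₗ[ℝ] (Fin 3 → ℝ))) χ)).hasFDerivAt.comp_hasDerivAt t hΩt
      exact this
    have hμt : HasDerivAt (fun s => I *ᵥ Ω s + (m * l) • (χ ⨯₃ v s))
        (I *ᵥ Ω' + (m * l) • (χ ⨯₃ v')) t := hIΩ.add (hχv.fun_const_smul _)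
    have hpt : HasDerivAt (fun s => ρ • v s + (m * l) • (Ω s ⨯₃ χ))
        (ρ • v' + (m * l) • (Ω' ⨯₃ χ)) t := (hvt.fun_const_smul ρ).add (hΩχ.fun_const_smul _)
    have e1 : I *ᵥ Ω' + (m * l) • (χ ⨯₃ v')
        = (I *ᵥ Ω t + (m * l) • (χ ⨯₃ v t)) ⨯₃ Ω t
          + (ρ • v t + (m * l) • (Ω t ⨯₃ χ)) ⨯₃ v t - (m * g * l) • (χ ⨯₃ Γ t) := by
      rw [← hμt.deriv]; exact hμ t
    have e2 : ρ • v' + (m * l) • (Ω' ⨯₃ χ)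
        = (ρ • v t + (m * l) • (Ω t ⨯₃ χ)) ⨯₃ Ω t := by
      rw [← hpt.deriv]; exact hp t
    have hΓt' : HasDerivAt Γ (Γ t ⨯₃ Ω t) t := (hΓeq t) ▸ hΓt
    have hEfun : E = fun s => (1 / 2) * (Ω s ⬝ᵥ I *ᵥ Ω s) + m * l * (v s ⬝ᵥ Ω s ⨯₃ χ)
        + (1 / 2) * ρ * (v s ⬝ᵥ v s) + m * g * l * (χ ⬝ᵥ Γ s) := funext hE
    rw [hEfun]
    have hD : HasDerivAt (fun s => (1 / 2) * (Ω s ⬝ᵥ I *ᵥ Ω s) + m * l * (v s ⬝ᵥ Ω s ⨯₃ χ)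
        + (1 / 2) * ρ * (v s ⬝ᵥ v s) + m * g * l * (χ ⬝ᵥ Γ s))
        ((1 / 2) * (Ω' ⬝ᵥ I *ᵥ Ω t + Ω t ⬝ᵥ I *ᵥ Ω')
          + m * l * (v' ⬝ᵥ Ω t ⨯₃ χ + v t ⬝ᵥ Ω' ⨯₃ χ)
          + (1 / 2) * ρ * (v' ⬝ᵥ v t + v t ⬝ᵥ v')
          + m * g * l * ((0 : Fin 3 → ℝ) ⬝ᵥ Γ t + χ ⬝ᵥ Γ t ⨯₃ Ω t)) t :=
      ((((hasDerivAt_dot hΩt hIΩ).const_mul _).add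
        ((hasDerivAt_dot hvt hΩχ).const_mul _)).add
        ((hasDerivAt_dot hvt hvt).const_mul _)).add
        ((hasDerivAt_dot (hasDerivAt_const t χ) hΓt').const_mul _)
    have hzero : (1 / 2) * (Ω' ⬝ᵥ I *ᵥ Ω t + Ω t ⬝ᵥ I *ᵥ Ω')
          + m * l * (v' ⬝ᵥ Ω t ⨯₃ χ + v t ⬝ᵥ Ω' ⨯₃ χ)
          + (1 / 2) * ρ * (v' ⬝ᵥ v t + v t ⬝ᵥ v')
          + m * g * l * ((0 : Fin 3 → ℝ) ⬝ᵥ Γ t + χ ⬝ᵥ Γ t ⨯₃ Ω t) = 0 := by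
      have A0 := congrFun e1 0
      have A1 := congrFun e1 1
      have A2 := congrFun e1 2
      have B0 := congrFun e2 0
      have B1 := congrFun e2 1
      have B2 := congrFun e2 2
      have S : ∀ i j, I j i = I i j := fun i j => congrFun (congrFun hIsymm i) j
      have S01 := S 0 1; have S02 := S 0 2; have S12 := S 1 2
      simp only [cross_apply, dotProduct, Matrix.mulVec, Fin.sum_univ_three,
        Pi.add_apply, Pi.sub_apply, Pi.smul_apply, smul_eq_mul, Pi.zero_apply,
        Matrix.cons_val_zero, Matrix.cons_val_one, Matrix.head_cons,
        Matrix.cons_val_two, Matrix.tail_cons] at A0 A1 A2 B0 B1 B2 ⊢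
      linear_combination Ω t 0 * A0 + Ω t 1 * A1 + Ω t 2 * A2
        + v t 0 * B0 + v t 1 * B1 + v t 2 * B2
        - ((1/2) * (Ω' 0 * Ω t 1 - Ω t 0 * Ω' 1)) * S01
        - ((1/2) * (Ω' 0 * Ω t 2 - Ω t 0 * Ω' 2)) * S02
        - ((1/2) * (Ω' 1 * Ω t 2 - Ω t 1 * Ω' 2)) * S12
    exact hzero ▸ hD
  have hdiff : Differentiable ℝ E := fun t => (key t).differentiableAt
  intro t
  exact is_const_of_deriv_eq_zero hdiff (fun s => (key s).deriv) t 0
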